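/- Let s be a nonempty compact convex subset of ℝⁿ (EuclideanSpace ℝ (Fin n)), let f : ℝⁿ → ℝ be twice continuously differentiable (ContDiff ℝ 2), and let ε > 0. Then there exist k, m ≥ 1, vectors a₁,…,a_k, c₁,…,c_m ∈ ℝⁿ and reals b₁,…,b_k, d₁,…,d_m such that for every x ∈ s, |f x - (max_{1 ≤ i ≤ k} (⟪aᵢ, x⟫ + bᵢ) - max_{1 ≤ j ≤ m} (⟪cⱼ, x⟫ + dⱼ))| ≤ ε. -/

import Mathlib

open scoped RealInnerProductSpace
open Set

variable {E : Type*} [NormedAddCommGroup E] [InnerProductSpace ℝ E]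



lemma my_tangent {s : Set E} (hconv : Convex ℝ s) {g : E → ℝ} (hg : ContDiff ℝ 2 g)
    {C : ℝ}
    (hC : ∀ z ∈ s, ∀ v : E, 0 ≤ fderiv ℝ (fderiv ℝ g) z v v ∧
      fderiv ℝ (fderiv ℝ g) z v v ≤ C * ‖v‖ ^ 2) :
    ∀ x ∈ s, ∀ y ∈ s, g y + fderiv ℝ g y (x - y) ≤ g x ∧
      g x ≤ g y + fderiv ℝ g y (x - y) + C * ‖x - y‖ ^ 2 := by
  intro x hx y hy
  set v : E := x - y with hv
  set γ : ℝ → E := fun t => y + t • v with hγdef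
  have hγmem : ∀ t ∈ Icc (0:ℝ) 1, γ t ∈ s := fun t ht => hconv.add_smul_sub_mem hy hx ht
  have hgdiff : Differentiable ℝ g := hg.differentiable two_ne_zero
  have hg' : ContDiff ℝ 1 (fderiv ℝ g) := hg.fderiv_right (by norm_num)
  have hγd : ∀ t : ℝ, HasDerivAt γ v t := by
    intro t
    simpa [hγdef] using ((hasDerivAt_id t).smul_const v).const_add y
  -- φ and ψ
  set φ : ℝ → ℝ := fun t => g (γ t) with hφdef
  set ψ : ℝ → ℝ := fun t => fderiv ℝ g (γ t) v with hψdef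
  have hφd : ∀ t : ℝ, HasDerivAt φ (ψ t) t := by
    intro t
    exact ((hgdiff (γ t)).hasFDerivAt).comp_hasDerivAt t (hγd t)
  have hψd : ∀ t : ℝ, HasDerivAt ψ (fderiv ℝ (fderiv ℝ g) (γ t) v v) t := by
    intro t
    have h1 : HasFDerivAt (fderiv ℝ g) (fderiv ℝ (fderiv ℝ g) (γ t)) (γ t) :=
      ((hg'.differentiable one_ne_zero) (γ t)).hasFDerivAt
    have h2 : HasDerivAt (fun u => fderiv ℝ g (γ u)) (fderiv ℝ (fderiv ℝ g) (γ t) v) t :=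
      h1.comp_hasDerivAt t (hγd t)
    simpa using h2.clm_apply (hasDerivAt_const t v)
  have hψcont : Continuous ψ := by
    have : Continuous fun t => fderiv ℝ g (γ t) :=
      (hg.continuous_fderiv two_ne_zero).comp (continuous_const.add (continuous_id.smul continuous_const))
    exact (this.clm_apply continuous_const)
  have hφcont : Continuous φ := hg.continuous.comp (continuous_const.add (continuous_id.smul continuous_const))
  have hψmono : MonotoneOn ψ (Icc (0:ℝ) 1) := by
    apply monotoneOn_of_deriv_nonneg (convex_Icc 0 1) hψcont.continuousOn
    · intro t ht
      exact ((hψd t).differentiableAt).differentiableWithinAt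
    · intro t ht
      rw [interior_Icc] at ht
      rw [(hψd t).deriv]
      exact (hC (γ t) (hγmem t (Ioo_subset_Icc_self ht)) v).1
  have hγ0 : γ 0 = y := by simp [hγdef]
  have hγ1 : γ 1 = x := by simp [hγdef, hv]
  obtain ⟨c, hc, hcval⟩ := exists_hasDerivAt_eq_slope φ ψ one_pos hφcont.continuousOn
    (fun t _ => hφd t)
  have hcval' : ψ c = g x - g y := by
    rw [hcval]; simp [hφdef, hγ0, hγ1]
  have hCnn : 0 ≤ C * ‖v‖ ^ 2 := le_trans (hC y hy v).1 (hC y hy v).2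
  have hψ0 : ψ 0 = fderiv ℝ g y v := by simp [hψdef, hγ0]
  constructor
  · have h01 : ψ 0 ≤ ψ c :=
      hψmono (by simp) ⟨hc.1.le, hc.2.le⟩ hc.1.le
    linarith [hcval', h01, hψ0.symm.le, hψ0.le]
  · obtain ⟨c', hc', hc'val⟩ := exists_hasDerivAt_eq_slope ψ
      (fun t => fderiv ℝ (fderiv ℝ g) (γ t) v v) hc.1 hψcont.continuousOn
      (fun t _ => hψd t)
    have hc'mem : γ c' ∈ s := hγmem c' ⟨hc'.1.le, le_trans hc'.2.le hc.2.le⟩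
    have hD := hC (γ c') hc'mem v
    rw [sub_zero] at hc'val
    have hc0 : (c:ℝ) ≠ 0 := ne_of_gt hc.1
    have hsub : ψ c - ψ 0 = fderiv ℝ (fderiv ℝ g) (γ c') v v * c := by
      rw [hc'val, div_mul_cancel₀ _ hc0]
    have hle : fderiv ℝ (fderiv ℝ g) (γ c') v v * c ≤ (C * ‖v‖ ^ 2) * 1 :=
      mul_le_mul hD.2 hc.2.le hc.1.le hCnn
    linarith [hcval', hψ0.le, hψ0.symm.le]


lemma my_quad_hasFDeriv (M : ℝ) (x : E) :
    HasFDerivAt (fun x : E => M / 2 * ‖x‖ ^ 2) (M • innerSL ℝ x) x := by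
  have h := ((hasStrictFDerivAt_norm_sq x).hasFDerivAt).const_smul (M / 2)
  have he : (M / 2) • ((2:ℕ) • innerSL ℝ x) = M • innerSL ℝ x := by
    ext w
    simp [smul_smul]
    ring
  rw [he] at h; exact h

lemma my_quad_fderiv (M : ℝ) :
    fderiv ℝ (fun x : E => M / 2 * ‖x‖ ^ 2) = ⇑(M • (innerSL ℝ : E →L[ℝ] E →L[ℝ] ℝ)) := by
  funext x
  simpa using (my_quad_hasFDeriv M x).fderiv

lemma my_quad_second (M : ℝ) (z v : E) :
    fderiv ℝ (fderiv ℝ (fun x : E => M / 2 * ‖x‖ ^ 2)) z v v = M * ‖v‖ ^ 2 := by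
  rw [my_quad_fderiv, ContinuousLinearMap.fderiv]
  simp [real_inner_self_eq_norm_sq, innerSL_apply_apply]
  left; rw [innerSL_apply_apply, real_inner_self_eq_norm_sq]

lemma my_quad_contDiff (M : ℝ) : ContDiff ℝ 2 (fun x : E => M / 2 * ‖x‖ ^ 2) :=
  contDiff_const.mul (contDiff_norm_sq ℝ)

lemma my_sum_second {f : E → ℝ} (hf : ContDiff ℝ 2 f) (M : ℝ) (z v : E) :
    fderiv ℝ (fderiv ℝ (fun x => f x + M / 2 * ‖x‖ ^ 2)) z v v
      = fderiv ℝ (fderiv ℝ f) z v v + M * ‖v‖ ^ 2 := by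
  have hfd : Differentiable ℝ f := hf.differentiable two_ne_zero
  have hf' : ContDiff ℝ 1 (fderiv ℝ f) := hf.fderiv_right (by norm_num)
  have h1 : fderiv ℝ (fun x => f x + M / 2 * ‖x‖ ^ 2)
      = fun z => fderiv ℝ f z + fderiv ℝ (fun x : E => M / 2 * ‖x‖ ^ 2) z := by
    funext z
    exact fderiv_add (hfd z) (((my_quad_contDiff M).differentiable two_ne_zero) z)
  rw [h1]
  have h2 : fderiv ℝ (fun z => fderiv ℝ f z + fderiv ℝ (fun x : E => M / 2 * ‖x‖ ^ 2) z) z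
      = fderiv ℝ (fderiv ℝ f) z + fderiv ℝ (fderiv ℝ (fun x : E => M / 2 * ‖x‖ ^ 2)) z := by
    apply fderiv_add ((hf'.differentiable one_ne_zero) z)
    rw [my_quad_fderiv]
    exact (M • (innerSL ℝ : E →L[ℝ] E →L[ℝ] ℝ)).differentiableAt
  rw [h2]
  have := my_quad_second (E := E) M z v
  simp only [ContinuousLinearMap.add_apply]
  rw [this]


theorem cdinn_approximates_twice_differentiable
    (n : ℕ) (s : Set (EuclideanSpace ℝ (Fin n)))
    (hs_ne : s.Nonempty) (hs_cpt : IsCompact s) (hs_cvx : Convex ℝ s)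
    (f : EuclideanSpace ℝ (Fin n) → ℝ) (hf : ContDiff ℝ 2 f)
    (ε : ℝ) (hε : 0 < ε) :
    ∃ (k m : ℕ), 1 ≤ k ∧ 1 ≤ m ∧
      ∃ (a : Fin k → EuclideanSpace ℝ (Fin n)) (b : Fin k → ℝ)
        (c : Fin m → EuclideanSpace ℝ (Fin n)) (d : Fin m → ℝ),
        ∀ x ∈ s,
          |f x - ((⨆ i : Fin k, (⟪a i, x⟫ + b i)) - ⨆ j : Fin m, (⟪c j, x⟫ + d j))| ≤ ε := by
  -- bound on the second derivative over s
  have hf' : ContDiff ℝ 1 (fderiv ℝ f) := hf.fderiv_right (by norm_num)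
  have hcont : Continuous fun z : EuclideanSpace ℝ (Fin n) => ‖fderiv ℝ (fderiv ℝ f) z‖ :=
    (hf'.continuous_fderiv one_ne_zero).norm
  obtain ⟨M, hM0, hMb⟩ : ∃ M : ℝ, 0 ≤ M ∧ ∀ z ∈ s, ∀ v : EuclideanSpace ℝ (Fin n),
      |fderiv ℝ (fderiv ℝ f) z v v| ≤ M * ‖v‖ ^ 2 := by
    obtain ⟨z₀, hz₀s, hz₀'⟩ := hs_cpt.exists_isMaxOn hs_ne hcont.continuousOn
    have hz₀ : ∀ z ∈ s, ‖fderiv ℝ (fderiv ℝ f) z‖ ≤ ‖fderiv ℝ (fderiv ℝ f) z₀‖ :=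
      fun z hz => hz₀' hz
    refine ⟨‖fderiv ℝ (fderiv ℝ f) z₀‖, norm_nonneg (fderiv ℝ (fderiv ℝ f) z₀), ?_⟩
    intro z hz v
    have h1 : |fderiv ℝ (fderiv ℝ f) z v v| ≤ ‖fderiv ℝ (fderiv ℝ f) z v‖ * ‖v‖ :=
      (fderiv ℝ (fderiv ℝ f) z v).le_opNorm v
    have h2 : ‖fderiv ℝ (fderiv ℝ f) z v‖ ≤ ‖fderiv ℝ (fderiv ℝ f) z‖ * ‖v‖ :=
      (fderiv ℝ (fderiv ℝ f) z).le_opNorm v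
    calc |fderiv ℝ (fderiv ℝ f) z v v| ≤ ‖fderiv ℝ (fderiv ℝ f) z v‖ * ‖v‖ := h1
      _ ≤ (‖fderiv ℝ (fderiv ℝ f) z‖ * ‖v‖) * ‖v‖ :=
          mul_le_mul_of_nonneg_right h2 (norm_nonneg v)
      _ ≤ (‖fderiv ℝ (fderiv ℝ f) z₀‖ * ‖v‖) * ‖v‖ :=
          mul_le_mul_of_nonneg_right
            (mul_le_mul_of_nonneg_right (hz₀ z hz) (norm_nonneg v)) (norm_nonneg v)
      _ = ‖fderiv ℝ (fderiv ℝ f) z₀‖ * ‖v‖ ^ 2 := by ring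
  -- the two convex pieces
  set g : EuclideanSpace ℝ (Fin n) → ℝ := fun x => f x + M / 2 * ‖x‖ ^ 2 with hgdef
  set q : EuclideanSpace ℝ (Fin n) → ℝ := fun x => M / 2 * ‖x‖ ^ 2 with hqdef
  have hgC : ContDiff ℝ 2 g := hf.add (my_quad_contDiff M)
  have hqC : ContDiff ℝ 2 q := my_quad_contDiff M
  have hCg : ∀ z ∈ s, ∀ v : EuclideanSpace ℝ (Fin n), 0 ≤ fderiv ℝ (fderiv ℝ g) z v v ∧
      fderiv ℝ (fderiv ℝ g) z v v ≤ (2 * M) * ‖v‖ ^ 2 := by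
    intro z hz v
    have hD := my_sum_second hf M z v
    have := hMb z hz v
    rw [hgdef, hD]
    constructor
    · cases abs_le.mp this; nlinarith
    · cases abs_le.mp this; nlinarith
  have hCq : ∀ z ∈ s, ∀ v : EuclideanSpace ℝ (Fin n), 0 ≤ fderiv ℝ (fderiv ℝ q) z v v ∧
      fderiv ℝ (fderiv ℝ q) z v v ≤ M * ‖v‖ ^ 2 := by
    intro z hz v
    rw [hqdef, my_quad_second M z v]
    constructor
    · positivity
    · exact le_rfl
  have htg := my_tangent hs_cvx hgC hCg
  have htq := my_tangent hs_cvx hqC hCq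
  -- δ-net
  obtain ⟨δ, hδpos, hg_err, hq_err⟩ : ∃ δ : ℝ, 0 < δ ∧ (2 * M) * δ ^ 2 ≤ ε / 2 ∧
      M * δ ^ 2 ≤ ε / 2 := by
    have hden : 0 < 4 * M + 2 := by linarith
    refine ⟨Real.sqrt (ε / (4 * M + 2)), Real.sqrt_pos.mpr (by positivity), ?_, ?_⟩ <;>
      rw [Real.sq_sqrt (by positivity : 0 ≤ ε / (4 * M + 2)),
        mul_div_assoc', div_le_div_iff₀ hden (by norm_num : (0:ℝ) < 2)] <;> nlinarith
  obtain ⟨t, hts, hcover⟩ := hs_cpt.elim_nhds_subcover (fun y => Metric.ball y δ)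
    (fun x _ => Metric.ball_mem_nhds x hδpos)
  have htne : t.Nonempty := by
    obtain ⟨x₀, hx₀⟩ := hs_ne
    obtain ⟨z, hz, _⟩ := Set.mem_iUnion₂.mp (hcover hx₀)
    exact ⟨z, hz⟩
  set k := t.card with hk
  have hk1 : 1 ≤ k := Finset.card_pos.mpr htne
  haveI : Nonempty (Fin k) := ⟨⟨0, hk1⟩⟩
  set y : Fin k → EuclideanSpace ℝ (Fin n) := fun i => (t.equivFin.symm i : EuclideanSpace ℝ (Fin n)) with hydef
  have hys : ∀ i, y i ∈ s := fun i => hts _ (t.equivFin.symm i).2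
  -- affine pieces
  set a : Fin k → EuclideanSpace ℝ (Fin n) := fun i => (InnerProductSpace.toDual ℝ (EuclideanSpace ℝ (Fin n))).symm (fderiv ℝ g (y i)) with hadef
  set b : Fin k → ℝ := fun i => g (y i) - ⟪a i, y i⟫ with hbdef
  set c : Fin k → EuclideanSpace ℝ (Fin n) := fun i => (InnerProductSpace.toDual ℝ (EuclideanSpace ℝ (Fin n))).symm (fderiv ℝ q (y i)) with hcdef
  set d : Fin k → ℝ := fun i => q (y i) - ⟪c i, y i⟫ with hddef
  have hkeyg : ∀ i (x : EuclideanSpace ℝ (Fin n)), ⟪a i, x⟫ + b i = g (y i) + fderiv ℝ g (y i) (x - y i) := by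
    intro i x
    simp only [hadef, hbdef, InnerProductSpace.toDual_symm_apply, map_sub]
    ring
  have hkeyq : ∀ i (x : EuclideanSpace ℝ (Fin n)), ⟪c i, x⟫ + d i = q (y i) + fderiv ℝ q (y i) (x - y i) := by
    intro i x
    simp only [hcdef, hddef, InnerProductSpace.toDual_symm_apply, map_sub]
    ring
  have hfq : ∀ x, f x = g x - q x := by intro x; simp [hgdef, hqdef]
  refine ⟨k, k, hk1, hk1, a, b, c, d, ?_⟩
  clear_value a b c d
  clear hadef hbdef hcdef hddef
  have hyball : ∀ x ∈ s, ∃ i : Fin k, ‖x - y i‖ < δ := by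
    intro x hx
    obtain ⟨z, hzt, hzx⟩ := Set.mem_iUnion₂.mp (hcover hx)
    refine ⟨t.equivFin ⟨z, hzt⟩, ?_⟩
    have : y (t.equivFin ⟨z, hzt⟩) = z := by simp [hydef]
    rw [this]
    simpa [dist_eq_norm] using hzx
  clear_value y
  clear hydef
  clear_value g q
  clear hgdef hqdef hgC hqC hCg hCq hcover
  intro x hx
  -- find a net point near x
  obtain ⟨i₀, hxz⟩ := hyball x hx
  have hnorm_sq : ‖x - y i₀‖ ^ 2 ≤ δ ^ 2 :=
    pow_le_pow_left₀ (norm_nonneg _) hxz.le 2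
  have hbdd : ∀ (u : Fin k → ℝ), BddAbove (Set.range u) := fun u => Set.Finite.bddAbove (Set.finite_range u)
  -- bounds for g
  have hG_ub : (⨆ i, (⟪a i, x⟫ + b i)) ≤ g x := by
    apply ciSup_le
    intro i
    rw [hkeyg i x]
    exact (htg x hx (y i) (hys i)).1
  have hG_lb : g x - ε / 2 ≤ ⨆ i, (⟪a i, x⟫ + b i) := by
    refine le_trans ?_ (le_ciSup (hbdd _) i₀)
    rw [hkeyg i₀ x]
    have h2 := (htg x hx (y i₀) (hys i₀)).2
    have : (2 * M) * ‖x - y i₀‖ ^ 2 ≤ (2 * M) * δ ^ 2 :=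
      mul_le_mul_of_nonneg_left hnorm_sq (by linarith)
    linarith [hg_err, h2, this]
  have hH_ub : (⨆ i, (⟪c i, x⟫ + d i)) ≤ q x := by
    apply ciSup_le
    intro i
    rw [hkeyq i x]
    exact (htq x hx (y i) (hys i)).1
  have hH_lb : q x - ε / 2 ≤ ⨆ i, (⟪c i, x⟫ + d i) := by
    refine le_trans ?_ (le_ciSup (hbdd _) i₀)
    rw [hkeyq i₀ x]
    have h2 := (htq x hx (y i₀) (hys i₀)).2
    have : M * ‖x - y i₀‖ ^ 2 ≤ M * δ ^ 2 :=
      mul_le_mul_of_nonneg_left hnorm_sq hM0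
    linarith [hq_err, h2, this]
  rw [hfq x, abs_le]
  constructor <;> linarith [hG_ub, hG_lb, hH_ub, hH_lb, hε.le]
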